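/- For every finite poset X with n elements, the Lie subalgebra 𝓛(X) of the Lie algebra of Tot_X × Tot_X matrices over ℚ (with the commutator bracket) generated by the set of matrices {B_{X,ε} : ε ∈ {0,1}^{{1,…,n−1}}} is solvable. -/

import Mathlib

/-- A linear extension of a partially ordered set `X` with `n` elements:
an order-preserving bijection `X ≃ Fin n`. -/
def LinExt (X : Type*) [PartialOrder X] (n : ℕ) : Type _ :=
  {P : X ≃ Fin n // ∀ a b : X, a ≤ b → P a ≤ P b}

/-- `eps P Q k = true` iff `Q⁻¹(k+2)` (1-based) is a `(P,Q)`-disagreement node, i.e.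
`ε_{PQ}(k+1) = 1` in 1-based indexing. -/
def eps {X : Type*} [PartialOrder X] {n : ℕ} (P Q : LinExt X n) (k : Fin (n - 1)) : Bool :=
  decide (P.1 (Q.1.symm ⟨k.1 + 1, by have := k.2; omega⟩) <
          P.1 (Q.1.symm ⟨k.1, by have := k.2; omega⟩))

/-- The 0-1 matrix `B_{X,ε}` over `ℚ`, with `(B_{X,ε})_{PQ} = 1` iff `ε_{PQ} = ε`. -/
noncomputable def Bmat (X : Type*) [PartialOrder X] (n : ℕ) (ε : Fin (n - 1) → Bool) :
    Matrix (LinExt X n) (LinExt X n) ℚ :=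
  fun P Q => if eps P Q = ε then 1 else 0

attribute [local instance 100] LieRing.ofAssociativeRing

namespace BSolv

open Finset

variable {X : Type*} [Fintype X]

section rnk
variable {κ κ' : Type*} [LinearOrder κ] [LinearOrder κ']

/-- rank of `x` among values of `key`. -/
def rnk (key : X → κ) (x : X) : ℕ := #(univ.filter fun y => key y < key x)

lemma rnk_lt_card (key : X → κ) (x : X) : rnk key x < Fintype.card X := by
  rw [← Finset.card_univ]
  apply Finset.card_lt_card
  refine ⟨Finset.subset_univ _, fun hsub => ?_⟩
  have hx := hsub (mem_univ x)
  simp only [mem_filter] at hx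
  exact lt_irrefl _ hx.2

lemma rnk_lt_of_lt {key : X → κ} {x y : X} (h : key x < key y) : rnk key x < rnk key y := by
  apply Finset.card_lt_card
  refine ⟨fun z hz => ?_, fun hsub => ?_⟩
  · simp only [mem_filter, mem_univ, true_and] at hz ⊢
    exact hz.trans h
  · have hx : x ∈ univ.filter fun z => key z < key y := by
      simp only [mem_filter, mem_univ, true_and]; exact h
    have := hsub hx
    simp only [mem_filter, mem_univ, true_and] at this
    exact lt_irrefl _ this

lemma rnk_eq_of_eq {key : X → κ} {x y : X} (h : key x = key y) : rnk key x = rnk key y := by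
  unfold rnk; congr 1; apply Finset.filter_congr; intro z _; rw [h]

lemma rnk_lt_iff {key : X → κ} {x y : X} : rnk key x < rnk key y ↔ key x < key y := by
  constructor
  · intro h
    rcases lt_trichotomy (key x) (key y) with h' | h' | h'
    · exact h'
    · exact absurd (rnk_eq_of_eq h') (Nat.ne_of_lt h)
    · exact absurd (rnk_lt_of_lt h') (by omega)
  · exact rnk_lt_of_lt

lemma rnk_eq_iff {key : X → κ} {x y : X} : rnk key x = rnk key y ↔ key x = key y := by
  constructor
  · intro h
    rcases lt_trichotomy (key x) (key y) with h' | h' | h'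
    · exact absurd (rnk_lt_of_lt h') (by omega)
    · exact h'
    · exact absurd (rnk_lt_of_lt h') (by omega)
  · exact rnk_eq_of_eq

lemma rnk_le_iff {key : X → κ} {x y : X} : rnk key x ≤ rnk key y ↔ key x ≤ key y := by
  rw [← not_lt, ← not_lt, rnk_lt_iff]

lemma rnk_congr {key1 : X → κ} {key2 : X → κ'}
    (h : ∀ x y, key1 x < key1 y ↔ key2 x < key2 y) : rnk key1 = rnk key2 := by
  funext x
  unfold rnk; congr 1; apply Finset.filter_congr; intro z _
  simp [h z x]

lemma rnk_equiv {n : ℕ} (D : X ≃ Fin n) (x : X) : rnk (fun y => D y) x = (D x).1 := by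
  unfold rnk
  have hc : #(univ.filter fun y => D y < D x) = #(univ.filter fun p : Fin n => p < D x) := by
    apply Finset.card_nbij (i := fun y => D y)
    · intro y hy; simp only [mem_coe, mem_filter, mem_univ, true_and] at hy ⊢; exact hy
    · intro a _ b _ hab; exact D.injective hab
    · intro p hp
      simp only [Set.mem_image, mem_coe, mem_filter, mem_univ, true_and] at hp ⊢
      exact ⟨D.symm p, by simpa using hp, by simp⟩
  rw [hc, show (univ.filter fun p : Fin n => p < D x) = Finset.Iio (D x) by ext p; simp]
  simp

end rnk

end BSolv
namespace BSolv

open Finset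

variable {X : Type*} [PartialOrder X] [Fintype X] {n : ℕ}

/-- Compatibility of a block-labelling with the partial order. -/
def XMono (f : X → Fin n) : Prop := ∀ a b : X, a ≤ b → f a ≤ f b

/-- Sorting key: primary key `f`, secondary key `C`. -/
def keyFC (f : X → Fin n) (C : LinExt X n) (x : X) : Fin n ×ₗ Fin n :=
  toLex (f x, C.1 x)

lemma keyFC_lt_iff {f : X → Fin n} {C : LinExt X n} {x y : X} :
    keyFC f C x < keyFC f C y ↔ f x < f y ∨ (f x = f y ∧ C.1 x < C.1 y) :=
  Prod.Lex.lt_iff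

lemma keyFC_eq_iff {f : X → Fin n} {C : LinExt X n} {x y : X} :
    keyFC f C x = keyFC f C y ↔ f x = f y ∧ C.1 x = C.1 y := by
  unfold keyFC
  rw [toLex.injective.eq_iff, Prod.mk.injEq]

/-- The position function of the result of sorting the linear extension `C`
by the keys `(f ·, C ·)` lexicographically. -/
def actFun (f : X → Fin n) (C : LinExt X n) : X → ℕ := rnk (keyFC f C)

lemma actFun_lt_iff {f : X → Fin n} {C : LinExt X n} {x y : X} :
    actFun f C x < actFun f C y ↔ f x < f y ∨ (f x = f y ∧ C.1 x < C.1 y) := by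
  rw [actFun, rnk_lt_iff, keyFC_lt_iff]

lemma actFun_eq_iff {f : X → Fin n} {C : LinExt X n} {x y : X} :
    actFun f C x = actFun f C y ↔ f x = f y ∧ C.1 x = C.1 y := by
  rw [actFun, rnk_eq_iff, keyFC_eq_iff]

variable (hn : Fintype.card X = n)

open scoped Classical

/-- The result of the face given by `f` acting on a linear extension `C`, as a
linear extension. -/
noncomputable def actL (f : X → Fin n) (hf : XMono f) (C : LinExt X n) : LinExt X n := by
  refine ⟨Equiv.ofBijective (fun x => (⟨actFun f C x, lt_of_lt_of_eq (rnk_lt_card _ _) hn⟩ : Fin n)) ?_, ?_⟩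
  · rw [Fintype.bijective_iff_injective_and_card]
    refine ⟨fun x y hxy => ?_, by simp [hn]⟩
    have : actFun f C x = actFun f C y := congrArg Fin.val hxy
    rw [actFun_eq_iff] at this
    exact C.1.injective this.2
  · intro a b hab
    have h1 : keyFC f C a ≤ keyFC f C b := by
      rw [keyFC, keyFC, Prod.Lex.le_iff]
      rcases lt_or_eq_of_le (hf a b hab) with h | h
      · exact Or.inl h
      · exact Or.inr ⟨h, C.2 a b hab⟩
    show (⟨actFun f C a, _⟩ : Fin n) ≤ ⟨actFun f C b, _⟩
    rw [Fin.mk_le_mk]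
    exact rnk_le_iff.2 h1

lemma actL_val (f : X → Fin n) (hf : XMono f) (C : LinExt X n) (x : X) :
    (((actL hn f hf C).1 x : Fin n) : ℕ) = actFun f C x := rfl

/-- The matrix of the sorting operator given by block-labelling `f`;
row `C`, column `D` entry is `1` iff sorting `C` by `f` gives `D`. -/
noncomputable def Tm (f : X → Fin n) : Matrix (LinExt X n) (LinExt X n) ℚ :=
  fun C D => if (fun x => ((D.1 x : Fin n) : ℕ)) = actFun f C then 1 else 0

lemma linext_coe_inj {D E : LinExt X n}
    (h : (fun x => ((D.1 x : Fin n) : ℕ)) = fun x => ((E.1 x : Fin n) : ℕ)) : D = E := by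
  apply Subtype.ext
  apply Equiv.ext
  intro x
  exact Fin.val_injective (congrFun h x)

lemma Tm_apply (f : X → Fin n) (hf : XMono f) (C D : LinExt X n) :
    Tm f C D = if D = actL hn f hf C then 1 else 0 := by
  unfold Tm
  congr 1
  simp only [eq_iff_iff]
  constructor
  · intro h
    apply linext_coe_inj (n := n)
    funext x
    rw [actL_val]
    exact congrFun h x
  · rintro rfl
    rfl

/-- The pairing (face product) of two block-labellings: sort primarily by `g`,
secondarily by `f`. -/
noncomputable def pairF (g f : X → Fin n) : X → Fin n :=
  fun x => ⟨rnk (fun y => toLex (g y, f y) : X → Fin n ×ₗ Fin n) x, lt_of_lt_of_eq (rnk_lt_card _ _) hn⟩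

lemma pairF_lt_iff {g f : X → Fin n} {x y : X} :
    pairF hn g f x < pairF hn g f y ↔ g x < g y ∨ (g x = g y ∧ f x < f y) := by
  unfold pairF
  rw [Fin.mk_lt_mk, rnk_lt_iff, Prod.Lex.lt_iff]
  exact Iff.rfl

lemma pairF_eq_iff {g f : X → Fin n} {x y : X} :
    pairF hn g f x = pairF hn g f y ↔ g x = g y ∧ f x = f y := by
  unfold pairF
  rw [Fin.mk.injEq, rnk_eq_iff, toLex.injective.eq_iff, Prod.mk.injEq]

lemma XMono_pairF {g f : X → Fin n} (hg : XMono g) (hf : XMono f) : XMono (pairF hn g f) := by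
  intro a b hab
  show (⟨_, _⟩ : Fin n) ≤ ⟨_, _⟩
  rw [Fin.mk_le_mk]
  apply rnk_le_iff.2
  rw [Prod.Lex.le_iff]
  rcases lt_or_eq_of_le (hg a b hab) with h | h
  · exact Or.inl h
  · exact Or.inr ⟨h, hf a b hab⟩

/-- Key composition lemma: acting by `f` then `g` equals acting by the pairing. -/
lemma actFun_comp (f g : X → Fin n) (hf : XMono f) (C : LinExt X n) :
    actFun g (actL hn f hf C) = actFun (pairF hn g f) C := by
  unfold actFun
  apply rnk_congr
  intro x y
  rw [keyFC_lt_iff, keyFC_lt_iff]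
  have h1 : (actL hn f hf C).1 x < (actL hn f hf C).1 y ↔
      f x < f y ∨ (f x = f y ∧ C.1 x < C.1 y) := by
    rw [Fin.lt_iff_val_lt_val, actL_val, actL_val, actFun_lt_iff]
  rw [h1, pairF_lt_iff, pairF_eq_iff]
  rcases lt_trichotomy (g x) (g y) with h | h | h <;>
    rcases lt_trichotomy (f x) (f y) with h' | h' | h' <;>
    simp [h, h', ne_of_lt, ne_of_gt, not_lt_of_gt, asymm] <;> tauto

variable [Fintype (LinExt X n)]

lemma Tm_mul (f g : X → Fin n) (hf : XMono f) (hg : XMono g) :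
    Tm (n := n) f * Tm g = Tm (pairF hn g f) := by
  ext C E
  rw [Matrix.mul_apply]
  rw [Finset.sum_eq_single (actL hn f hf C)]
  · rw [Tm_apply hn f hf, if_pos rfl, one_mul]
    unfold Tm
    rw [actFun_comp hn f g hf C]
  · intro D _ hD
    rw [Tm_apply hn f hf, if_neg hD, zero_mul]
  · intro h
    exact absurd (mem_univ _) h

end BSolv

namespace BSolv

open Finset

open scoped Classical

variable {X : Type*} [PartialOrder X] [Fintype X] {n : ℕ}
variable (hn : Fintype.card X = n)

/-- The kernel (unordered partition) of a block-labelling, as a finset of pairs. -/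
noncomputable def kerF (f : X → Fin n) : Finset (X × X) :=
  univ.filter fun p => f p.1 = f p.2

lemma mem_kerF {f : X → Fin n} {p : X × X} : p ∈ kerF f ↔ f p.1 = f p.2 := by
  simp [kerF]

lemma kerF_pairF (g f : X → Fin n) : kerF (pairF hn g f) = kerF g ∩ kerF f := by
  ext p
  simp only [mem_kerF, Finset.mem_inter]
  rw [pairF_eq_iff]

/-- Collapse: if the blocks of `g` refine those of `f`, sorting by `(g, f)` is sorting by `g`. -/
lemma actFun_pairF_collapse {g f : X → Fin n} (h : kerF g ⊆ kerF f) (C : LinExt X n) :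
    actFun (pairF hn g f) C = actFun g C := by
  have hker : ∀ x y : X, g x = g y → f x = f y := by
    intro x y hxy
    have := h ((mem_kerF (p := (x, y))).2 hxy)
    exact mem_kerF.1 this
  unfold actFun
  apply rnk_congr
  intro x y
  rw [keyFC_lt_iff, keyFC_lt_iff, pairF_lt_iff, pairF_eq_iff]
  constructor
  · rintro (⟨hg | ⟨hg, hf⟩⟩ | ⟨⟨hg, _⟩, hC⟩)
    · exact Or.inl hg
    · exact absurd (hker _ _ hg) (ne_of_lt hf)
    · exact Or.inr ⟨hg, hC⟩
  · rintro (hg | ⟨hg, hC⟩)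
    · exact Or.inl (Or.inl hg)
    · exact Or.inr ⟨⟨hg, hker _ _ hg⟩, hC⟩

lemma Tm_pairF_collapse {g f : X → Fin n} (h : kerF g ⊆ kerF f) :
    Tm (pairF hn g f) = Tm g := by
  unfold Tm
  funext C D
  rw [actFun_pairF_collapse hn h]

end BSolv

namespace BSolv

open Finset

open scoped Classical

variable {n : ℕ}

lemma filter_le_card (a : Fin n) : #(univ.filter fun p : Fin n => p ≤ a) = a.1 + 1 := by
  rw [show (univ.filter fun p : Fin n => p ≤ a) = Finset.Iic a by ext p; simp]
  exact Fin.card_Iic a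

lemma filter_lt_card (a : Fin n) : #(univ.filter fun p : Fin n => p < a) = a.1 := by
  rw [show (univ.filter fun p : Fin n => p < a) = Finset.Iio a by ext p; simp]
  exact Fin.card_Iio a

/-- The jump set of a labelling, defined via counting (invariant under domain bijections). -/
noncomputable def JsetF {Y : Type*} [Fintype Y] (f : Y → Fin n) : Finset (Fin (n - 1)) :=
  univ.filter fun k => ∃ v : Fin n, #(univ.filter fun x => f x ≤ v) = k.1 + 1

/-- The ascent set of a function on positions. -/
noncomputable def JumpSet (φ : Fin n → Fin n) : Finset (Fin (n - 1)) :=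
  univ.filter fun k =>
    φ ⟨k.1, by have := k.2; omega⟩ < φ ⟨k.1 + 1, by have := k.2; omega⟩

lemma mem_JumpSet {φ : Fin n → Fin n} {k : Fin (n - 1)} :
    k ∈ JumpSet φ ↔
      φ ⟨k.1, by have := k.2; omega⟩ < φ ⟨k.1 + 1, by have := k.2; omega⟩ := by
  simp [JumpSet]

lemma Jset_eq_JumpSet {φ : Fin n → Fin n} (hφ : Monotone φ) : JsetF φ = JumpSet φ := by
  ext k
  have hk1 : k.1 < n := by have := k.2; omega
  have hk2 : k.1 + 1 < n := by have := k.2; omega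
  set ka : Fin n := ⟨k.1, hk1⟩
  set kb : Fin n := ⟨k.1 + 1, hk2⟩
  simp only [JsetF, mem_filter, mem_univ, true_and, mem_JumpSet]
  constructor
  · rintro ⟨v, hv⟩
    have h1 : φ ka ≤ v := by
      by_contra hlt
      push_neg at hlt
      have hsub : (univ.filter fun p : Fin n => φ p ≤ v) ⊆ univ.filter fun p => p < ka := by
        intro p hp
        simp only [mem_filter, mem_univ, true_and] at hp ⊢
        by_contra hka
        push_neg at hka
        exact absurd hp (not_le_of_gt (lt_of_lt_of_le hlt (hφ hka)))
      have := Finset.card_le_card hsub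
      rw [hv, filter_lt_card] at this
      have h' : k.1 + 1 ≤ k.1 := this
      omega
    have h2 : v < φ kb := by
      by_contra hge
      push_neg at hge
      have hsub : (univ.filter fun p : Fin n => p ≤ kb) ⊆ univ.filter fun p => φ p ≤ v := by
        intro p hp
        simp only [mem_filter, mem_univ, true_and] at hp ⊢
        exact le_trans (hφ hp) hge
      have := Finset.card_le_card hsub
      rw [hv, filter_le_card] at this
      have h' : k.1 + 1 + 1 ≤ k.1 + 1 := this
      omega
    exact lt_of_le_of_lt h1 h2
  · intro h
    refine ⟨φ ka, ?_⟩
    have heq : (univ.filter fun p : Fin n => φ p ≤ φ ka) = univ.filter fun p => p ≤ ka := by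
      ext p
      simp only [mem_filter, mem_univ, true_and]
      constructor
      · intro hp
        by_contra hka
        push_neg at hka
        have : kb ≤ p := by
          rw [Fin.le_def]
          rw [Fin.lt_def] at hka
          exact hka
        exact absurd (le_trans (hφ this) hp) (not_le_of_gt h)
      · intro hp
        exact hφ hp
    rw [heq, filter_le_card]

lemma Jset_comp {X : Type*} [Fintype X] (D : X ≃ Fin n) (φ : Fin n → Fin n) :
    JsetF (fun x => φ (D x)) = JsetF φ := by
  unfold JsetF
  apply Finset.filter_congr
  intro k _
  have hc : ∀ v : Fin n,
      #(univ.filter fun x : X => φ (D x) ≤ v) = #(univ.filter fun p : Fin n => φ p ≤ v) := by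
    intro v
    apply Finset.card_nbij (i := fun x => D x)
    · intro y hy; simp only [mem_coe, mem_filter, mem_univ, true_and] at hy ⊢; exact hy
    · intro a _ b _ hab; exact D.injective hab
    · intro p hp
      simp only [Set.mem_image, mem_coe, mem_filter, mem_univ, true_and] at hp ⊢
      exact ⟨D.symm p, by simpa using hp, by simp⟩
  simp only [hc]

/-- The staircase labelling with jumps exactly at `S`. -/
noncomputable def stair (S : Finset (Fin (n - 1))) (p : Fin n) : Fin n :=
  ⟨#(S.filter fun k => k.1 < p.1), by
    have h1 : #(S.filter fun k => k.1 < p.1) ≤ #S := Finset.card_filter_le _ _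
    have h2 : #S ≤ Fintype.card (Fin (n - 1)) := Finset.card_le_univ S
    have h3 : 0 < n := p.pos
    simp only [Fintype.card_fin] at h2
    omega⟩

lemma stair_mono (S : Finset (Fin (n - 1))) : Monotone (stair S) := by
  intro p q hpq
  rw [stair, stair, Fin.mk_le_mk]
  apply Finset.card_le_card
  intro k hk
  simp only [mem_filter] at hk ⊢
  exact ⟨hk.1, lt_of_lt_of_le hk.2 hpq⟩

lemma stair_succ (S : Finset (Fin (n - 1))) (k : Fin (n - 1)) :
    #(S.filter fun j => j.1 < k.1 + 1) =
      #(S.filter fun j => j.1 < k.1) + (if k ∈ S then 1 else 0) := by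
  have hstep : (S.filter fun j => j.1 < k.1 + 1) =
      if k ∈ S then insert k (S.filter fun j => j.1 < k.1) else S.filter fun j => j.1 < k.1 := by
    split_ifs with hk
    · ext j
      simp only [mem_filter, Finset.mem_insert]
      constructor
      · rintro ⟨hjS, hj⟩
        rcases Nat.lt_or_ge j.1 k.1 with h | h
        · exact Or.inr ⟨hjS, h⟩
        · exact Or.inl (Fin.ext (by omega))
      · rintro (rfl | ⟨hjS, hj⟩)
        · exact ⟨hk, by omega⟩
        · exact ⟨hjS, by omega⟩
    · ext j
      simp only [mem_filter]
      constructor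
      · rintro ⟨hjS, hj⟩
        refine ⟨hjS, ?_⟩
        rcases Nat.lt_or_ge j.1 k.1 with h | h
        · exact h
        · exact absurd (Fin.ext (show j.1 = k.1 by omega) : j = k) (fun hjk => hk (hjk ▸ hjS))
      · rintro ⟨hjS, hj⟩
        exact ⟨hjS, by omega⟩
  rw [hstep]
  split_ifs with hk
  · rw [Finset.card_insert_of_notMem (by simp)]
  · omega

lemma JumpSet_stair (S : Finset (Fin (n - 1))) : JumpSet (stair S) = S := by
  ext k
  have hk1 : k.1 < n := by have := k.2; omega
  have hk2 : k.1 + 1 < n := by have := k.2; omega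
  have key : ((stair S ⟨k.1, hk1⟩ : Fin n).1 < (stair S ⟨k.1 + 1, hk2⟩ : Fin n).1) ↔ k ∈ S := by
    show #(S.filter fun j => j.1 < k.1) < #(S.filter fun j => j.1 < k.1 + 1) ↔ _
    rw [stair_succ]
    constructor
    · intro h
      by_contra hk
      rw [if_neg hk] at h
      omega
    · intro hk
      rw [if_pos hk]
      omega
  rw [mem_JumpSet, Fin.lt_def]
  exact key

/-- Number of monotone labellings of positions with jump set between `T` and `S`. -/
noncomputable def hcnt (n : ℕ) (S T : Finset (Fin (n - 1))) : ℕ :=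
  #((univ : Finset (Fin n → Fin n)).filter fun φ =>
      Monotone φ ∧ JsetF φ ⊆ S ∧ T ⊆ JumpSet φ)

lemma hcnt_eq_zero {S T : Finset (Fin (n - 1))} (h : ¬ T ⊆ S) : hcnt n S T = 0 := by
  rw [hcnt, Finset.card_eq_zero]
  rw [Finset.filter_eq_empty_iff]
  rintro φ _ ⟨hmono, hJS, hTJ⟩
  rw [Jset_eq_JumpSet hmono] at hJS
  exact h (subset_trans hTJ hJS)

lemma hcnt_self_pos (S : Finset (Fin (n - 1))) : 0 < hcnt n S S := by
  rw [hcnt, Finset.card_pos]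
  refine ⟨stair S, ?_⟩
  rw [mem_filter]
  refine ⟨mem_univ _, stair_mono S, ?_, ?_⟩
  · rw [Jset_eq_JumpSet (stair_mono S), JumpSet_stair]
  · rw [JumpSet_stair]

end BSolv

namespace BSolv

open Finset

open scoped Classical

variable {X : Type*} [PartialOrder X] [Fintype X] {n : ℕ}

/-- Main translation: the face of `φ` (transported along `D`) maps `C` to `D` iff `φ` is
monotone and jumps at every descent of `C` relative to `D`. -/
lemma main_trans (C D : LinExt X n) (φ : Fin n → Fin n) :
    (XMono (fun x => φ (D.1 x)) ∧ actFun (fun x => φ (D.1 x)) C = fun x => ((D.1 x : Fin n) : ℕ))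
    ↔ (Monotone φ ∧ ∀ k : Fin (n - 1), eps C D k = true →
        φ ⟨k.1, by have := k.2; omega⟩ < φ ⟨k.1 + 1, by have := k.2; omega⟩) := by
  set f : X → Fin n := fun x => φ (D.1 x) with hfdef
  constructor
  · rintro ⟨hmono, hact⟩
    have hkey : ∀ x y : X, keyFC f C x < keyFC f C y ↔ D.1 x < D.1 y := by
      intro x y
      rw [← rnk_lt_iff (key := keyFC f C)]
      show actFun f C x < actFun f C y ↔ _
      rw [hact]
      exact (Fin.lt_def).symm
    constructor
    · intro p q hpq
      rcases lt_or_eq_of_le hpq with hlt | heq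
      · have hD : D.1 (D.1.symm p) < D.1 (D.1.symm q) := by simpa using hlt
        have hk := (hkey _ _).2 hD
        rw [keyFC_lt_iff] at hk
        have hfp : f (D.1.symm p) = φ p := by simp [hfdef]
        have hfq : f (D.1.symm q) = φ q := by simp [hfdef]
        rcases hk with h | ⟨h, _⟩
        · rw [hfp, hfq] at h; exact le_of_lt h
        · rw [hfp, hfq] at h; exact le_of_eq h
      · rw [heq]
    · intro k hk
      have hk1 : k.1 < n := by have := k.2; omega
      have hk2 : k.1 + 1 < n := by have := k.2; omega
      set x := D.1.symm ⟨k.1, hk1⟩ with hx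
      set y := D.1.symm ⟨k.1 + 1, hk2⟩ with hy
      have hD : D.1 x < D.1 y := by
        rw [hx, hy]
        simp only [Equiv.apply_symm_apply]
        rw [Fin.mk_lt_mk]
        omega
      have hkk := (hkey x y).2 hD
      rw [keyFC_lt_iff] at hkk
      have hC : C.1 y < C.1 x := of_decide_eq_true hk
      have hfx : f x = φ ⟨k.1, hk1⟩ := by simp [hfdef, hx]
      have hfy : f y = φ ⟨k.1 + 1, hk2⟩ := by simp [hfdef, hy]
      rcases hkk with h | ⟨_, h⟩
      · rw [hfx, hfy] at h; exact h
      · exact absurd hC (not_lt_of_gt h)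
  · rintro ⟨hφ, hdes⟩
    have step : ∀ (p : ℕ) (hp1 : p < n) (hp2 : p + 1 < n),
        keyFC f C (D.1.symm ⟨p, hp1⟩) < keyFC f C (D.1.symm ⟨p + 1, hp2⟩) := by
      intro p hp1 hp2
      set x := D.1.symm ⟨p, hp1⟩ with hx
      set y := D.1.symm ⟨p + 1, hp2⟩ with hy
      have hfx : f x = φ ⟨p, hp1⟩ := by simp [hfdef, hx]
      have hfy : f y = φ ⟨p + 1, hp2⟩ := by simp [hfdef, hy]
      rw [keyFC_lt_iff]
      rcases lt_or_eq_of_le (hφ (show (⟨p, hp1⟩ : Fin n) ≤ ⟨p + 1, hp2⟩ by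
          rw [Fin.mk_le_mk]; omega)) with h | h
      · left; rw [hfx, hfy]; exact h
      · right
        refine ⟨by rw [hfx, hfy]; exact h, ?_⟩
        rcases lt_trichotomy (C.1 x) (C.1 y) with hC | hC | hC
        · exact hC
        · exfalso
          have hxy : x = y := C.1.injective hC
          have : (⟨p, hp1⟩ : Fin n) = ⟨p + 1, hp2⟩ := by
            have := congrArg D.1 hxy
            rw [hx, hy] at this
            simpa using this
          rw [Fin.mk.injEq] at this
          omega
        · exfalso
          have hkfin : p < n - 1 := by omega
          have hepsk : eps C D ⟨p, hkfin⟩ = true := decide_eq_true hC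
          have := hdes ⟨p, hkfin⟩ hepsk
          exact absurd this (by rw [h]; exact lt_irrefl _)
    have key_lt : ∀ (q p : ℕ) (hp : p < n) (hq : q < n), p < q →
        keyFC f C (D.1.symm ⟨p, hp⟩) < keyFC f C (D.1.symm ⟨q, hq⟩) := by
      intro q
      induction q with
      | zero => intro p hp hq hpq; omega
      | succ q ih =>
        intro p hp hq hpq
        rcases Nat.lt_or_ge p q with h | h
        · exact lt_trans (ih p hp (by omega) h) (step q (by omega) hq)
        · have : p = q := by omega
          subst this
          exact step p hp hq
    have hkey2 : ∀ x y : X, D.1 x < D.1 y → keyFC f C x < keyFC f C y := by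
      intro x y h
      have := key_lt (D.1 y).1 (D.1 x).1 (D.1 x).2 (D.1 y).2 (Fin.lt_def.mp h)
      simpa using this
    have hkey : ∀ x y : X, keyFC f C x < keyFC f C y ↔ D.1 x < D.1 y := by
      intro x y
      constructor
      · intro h
        rcases lt_trichotomy (D.1 x) (D.1 y) with h' | h' | h'
        · exact h'
        · have : x = y := D.1.injective h'
          subst this
          exact absurd h (lt_irrefl _)
        · exact absurd h (not_lt_of_gt (hkey2 _ _ h'))
      · exact hkey2 x y
    constructor
    · intro a b hab
      rcases lt_or_eq_of_le (D.2 a b hab) with h | h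
      · have := (hkey a b).2 h
        rw [keyFC_lt_iff] at this
        rcases this with h' | ⟨h', _⟩
        · exact le_of_lt h'
        · exact le_of_eq h'
      · have : a = b := D.1.injective h
        rw [this]
    · funext x
      show rnk (keyFC f C) x = _
      rw [rnk_congr (key2 := fun y => D.1 y) (fun a b => hkey a b)]
      exact rnk_equiv D.1 x

end BSolv

namespace BSolv

open Finset

open scoped Classical

variable {X : Type*} [PartialOrder X] [Fintype X] {n : ℕ}
variable (hn : Fintype.card X = n) [Fintype (LinExt X n)]

/-- boolean vector as a finset -/
noncomputable def toSet (ε : Fin (n - 1) → Bool) : Finset (Fin (n - 1)) :=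
  univ.filter fun k => ε k = true

lemma toSet_inj {ε ε' : Fin (n - 1) → Bool} (h : toSet ε = toSet ε') : ε = ε' := by
  funext k
  have := Finset.ext_iff.1 h k
  simp only [toSet, mem_filter, mem_univ, true_and] at this
  rcases Bool.eq_false_or_eq_true (ε k) with h1 | h1 <;>
    rcases Bool.eq_false_or_eq_true (ε' k) with h2 | h2 <;> simp_all

/-- The sum of sorting operators over faces with jump set inside `S`. -/
noncomputable def Wmat (S : Finset (Fin (n - 1))) : Matrix (LinExt X n) (LinExt X n) ℚ :=
  ∑ f ∈ (univ : Finset (X → Fin n)).filter (fun f => XMono f ∧ JsetF f ⊆ S), Tm f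

lemma Wmat_entry (S : Finset (Fin (n - 1))) (C D : LinExt X n) :
    Wmat (n := n) S C D = (hcnt n S (toSet (eps C D)) : ℚ) := by
  unfold Wmat
  rw [show (∑ f ∈ (univ : Finset (X → Fin n)).filter (fun f => XMono f ∧ JsetF f ⊆ S), Tm f) C D
      = ∑ f ∈ (univ : Finset (X → Fin n)).filter (fun f => XMono f ∧ JsetF f ⊆ S), Tm f C D by
    simp [Matrix.sum_apply]]
  unfold Tm
  rw [Finset.sum_boole]
  rw [Finset.filter_filter]
  norm_cast
  unfold hcnt
  apply Finset.card_nbij (i := fun f => fun p => f (D.1.symm p))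
  · intro f hf
    simp only [mem_coe, mem_filter, mem_univ, true_and] at hf ⊢
    obtain ⟨⟨hmono, hJ⟩, hact⟩ := hf
    set φ : Fin n → Fin n := fun p => f (D.1.symm p) with hφdef
    have hfeq : (fun x => φ (D.1 x)) = f := by funext x; simp [hφdef]
    have hmt := (main_trans C D φ).1 (by rw [hfeq]; exact ⟨hmono, hact.symm⟩)
    refine ⟨hmt.1, ?_, ?_⟩
    · rw [← Jset_comp D.1 φ, hfeq]; exact hJ
    · intro k hk
      simp only [toSet, mem_filter, mem_univ, true_and] at hk
      rw [mem_JumpSet]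
      exact hmt.2 k hk
  · intro a _ b _ hab
    funext x
    have := congrFun hab (D.1 x)
    simpa using this
  · intro φ hφ
    simp only [Set.mem_image, mem_coe, mem_filter, mem_univ, true_and] at hφ ⊢
    obtain ⟨hmono, hJ, hT⟩ := hφ
    refine ⟨fun x => φ (D.1 x), ⟨⟨?_, ?_⟩, ?_⟩, by funext p; simp⟩
    · exact ((main_trans C D φ).2 ⟨hmono, fun k hk => mem_JumpSet.1 (hT (by
        simp only [toSet, mem_filter, mem_univ, true_and]; exact hk))⟩).1
    · rw [Jset_comp D.1 φ]; exact hJ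
    · exact ((main_trans C D φ).2 ⟨hmono, fun k hk => mem_JumpSet.1 (hT (by
        simp only [toSet, mem_filter, mem_univ, true_and]; exact hk))⟩).2.symm

lemma Wmat_eq_sum (S : Finset (Fin (n - 1))) :
    Wmat (n := n) (X := X) S =
      ∑ ε : Fin (n - 1) → Bool, (hcnt n S (toSet ε) : ℚ) • Bmat X n ε := by
  ext C D
  rw [Wmat_entry S C D]
  rw [show (∑ ε : Fin (n - 1) → Bool, (hcnt n S (toSet ε) : ℚ) • Bmat X n ε) C D
      = ∑ ε : Fin (n - 1) → Bool, (hcnt n S (toSet ε) : ℚ) * Bmat X n ε C D by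
    simp [Matrix.sum_apply, Matrix.smul_apply]]
  rw [Finset.sum_eq_single (eps C D)]
  · unfold Bmat
    rw [if_pos rfl, mul_one]
  · intro ε _ hε
    unfold Bmat
    rw [if_neg (fun h => hε h.symm), mul_zero]
  · intro h
    exact absurd (mem_univ _) h

/-- The set of sorting-operator matrices for compatible labellings. -/
def Agen : Set (Matrix (LinExt X n) (LinExt X n) ℚ) :=
  {M | ∃ f : X → Fin n, XMono f ∧ M = Tm f}

/-- The span of sorting operators. -/
noncomputable def Amod : Submodule ℚ (Matrix (LinExt X n) (LinExt X n) ℚ) :=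
  Submodule.span ℚ (Agen (X := X) (n := n))

lemma Wmat_mem (S : Finset (Fin (n - 1))) : Wmat (n := n) (X := X) S ∈ Amod := by
  apply Submodule.sum_mem
  intro f hf
  exact Submodule.subset_span ⟨f, (Finset.mem_filter.1 hf).2.1, rfl⟩

lemma Bmat_mem (ε : Fin (n - 1) → Bool) : Bmat X n ε ∈ Amod (X := X) (n := n) := by
  suffices H : ∀ (m : ℕ) (ε : Fin (n - 1) → Bool), #(toSet ε) = m →
      Bmat X n ε ∈ Amod (X := X) (n := n) from H _ ε rfl
  intro m
  induction m using Nat.strong_induction_on with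
  | _ m ih =>
    intro ε hm
    have hW := Wmat_eq_sum (X := X) (toSet ε)
    rw [← Finset.add_sum_erase _ _ (mem_univ ε)] at hW
    have hrest : ∑ ε' ∈ univ.erase ε, (hcnt n (toSet ε) (toSet ε') : ℚ) • Bmat X n ε' ∈
        Amod (X := X) (n := n) := by
      apply Submodule.sum_mem
      intro ε' hε'
      by_cases hsub : toSet ε' ⊆ toSet ε
      · have hne : toSet ε' ≠ toSet ε := fun h => (Finset.mem_erase.1 hε').1 (toSet_inj h)
        have hlt : #(toSet ε') < m := hm ▸ Finset.card_lt_card (ssubset_of_subset_of_ne hsub hne)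
        exact Submodule.smul_mem _ _ (ih _ hlt ε' rfl)
      · rw [hcnt_eq_zero hsub]
        simp only [Nat.cast_zero, zero_smul]
        exact Submodule.zero_mem _
    have hterm : (hcnt n (toSet ε) (toSet ε) : ℚ) • Bmat X n ε ∈ Amod (X := X) (n := n) := by
      have : (hcnt n (toSet ε) (toSet ε) : ℚ) • Bmat X n ε =
          Wmat (n := n) (X := X) (toSet ε) -
            ∑ ε' ∈ univ.erase ε, (hcnt n (toSet ε) (toSet ε') : ℚ) • Bmat X n ε' := by
        rw [hW]; abel
      rw [this]
      exact Submodule.sub_mem _ (Wmat_mem _) hrest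
    have hne : (hcnt n (toSet ε) (toSet ε) : ℚ) ≠ 0 := by
      exact_mod_cast (hcnt_self_pos (n := n) (toSet ε)).ne'
    have := Submodule.smul_mem (Amod (X := X) (n := n)) (hcnt n (toSet ε) (toSet ε) : ℚ)⁻¹ hterm
    rwa [inv_smul_smul₀ hne] at this

end BSolv

namespace BSolv

open Finset

open scoped Classical

variable {X : Type*} [PartialOrder X] [Fintype X] {n : ℕ}
variable (hn : Fintype.card X = n) [Fintype (LinExt X n)]

/-- Differences of sorting operators with equal (small) kernels. -/
def Ngen (c : ℕ) : Set (Matrix (LinExt X n) (LinExt X n) ℚ) :=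
  {M | ∃ f g : X → Fin n, XMono f ∧ XMono g ∧ kerF f = kerF g ∧ #(kerF f) ≤ c ∧
    M = Tm f - Tm g}

noncomputable def Nmod (c : ℕ) : Submodule ℚ (Matrix (LinExt X n) (LinExt X n) ℚ) :=
  Submodule.span ℚ (Ngen (X := X) (n := n) c)

/-- Commutators of spans lie in `P` if commutators of generators do. -/
lemma commutator_span {s : Set (Matrix (LinExt X n) (LinExt X n) ℚ)}
    {P : Submodule ℚ (Matrix (LinExt X n) (LinExt X n) ℚ)}
    (hgen : ∀ a ∈ s, ∀ b ∈ s, a * b - b * a ∈ P) {x y}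
    (hx : x ∈ Submodule.span ℚ s) (hy : y ∈ Submodule.span ℚ s) : x * y - y * x ∈ P := by
  induction hx, hy using Submodule.span_induction₂ with
  | mem_mem a b ha hb => exact hgen a ha b hb
  | zero_left y hy => simpa using P.zero_mem
  | zero_right x hx => simpa using P.zero_mem
  | add_left x y z _ _ _ h1 h2 =>
    have := P.add_mem h1 h2
    have heq : (x + y) * z - z * (x + y) = (x * z - z * x) + (y * z - z * y) := by
      noncomm_ring
    rwa [heq]
  | add_right x y z _ _ _ h1 h2 =>
    have := P.add_mem h1 h2
    have heq : x * (y + z) - (y + z) * x = (x * y - y * x) + (x * z - z * x) := by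
      noncomm_ring
    rwa [heq]
  | smul_left r x y _ _ h =>
    have := P.smul_mem r h
    have heq : (r • x) * y - y * (r • x) = r • (x * y - y * x) := by
      rw [smul_mul_assoc, mul_smul_comm, smul_sub]
    rwa [heq]
  | smul_right r x y _ _ h =>
    have := P.smul_mem r h
    have heq : x * (r • y) - (r • y) * x = r • (x * y - y * x) := by
      rw [smul_mul_assoc, mul_smul_comm, smul_sub]
    rwa [heq]

lemma mul_mem_span {s : Set (Matrix (LinExt X n) (LinExt X n) ℚ)}
    {P : Submodule ℚ (Matrix (LinExt X n) (LinExt X n) ℚ)}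
    (hgen : ∀ a ∈ s, ∀ b ∈ s, a * b ∈ P) {x y}
    (hx : x ∈ Submodule.span ℚ s) (hy : y ∈ Submodule.span ℚ s) : x * y ∈ P := by
  induction hx, hy using Submodule.span_induction₂ with
  | mem_mem a b ha hb => exact hgen a ha b hb
  | zero_left y hy => simpa using P.zero_mem
  | zero_right x hx => simpa using P.zero_mem
  | add_left x y z _ _ _ h1 h2 => rw [add_mul]; exact P.add_mem h1 h2
  | add_right x y z _ _ _ h1 h2 => rw [mul_add]; exact P.add_mem h1 h2
  | smul_left r x y _ _ h => rw [smul_mul_assoc]; exact P.smul_mem r h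
  | smul_right r x y _ _ h => rw [mul_smul_comm]; exact P.smul_mem r h

lemma Nmod_zero_le_bot : Nmod (X := X) (n := n) 0 ≤ ⊥ := by
  rw [Nmod, Submodule.span_le]
  rintro M ⟨f, g, hf, hg, hfg, hc, rfl⟩
  by_cases hE : Nonempty X
  · exfalso
    obtain ⟨x⟩ := hE
    have hmem : (x, x) ∈ kerF (n := n) f := mem_kerF.2 rfl
    have := Finset.card_pos.2 ⟨(x, x), hmem⟩
    omega
  · have hIE : IsEmpty X := not_nonempty_iff.1 hE
    have : f = g := funext fun x => hIE.elim x
    rw [this]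
    simp [Submodule.mem_bot]

/-- The solvability chain. -/
noncomputable def Cseq (j : ℕ) : Submodule ℚ (Matrix (LinExt X n) (LinExt X n) ℚ) :=
  if j = 0 then Amod (X := X) (n := n) else Nmod (X := X) (n := n) (n * n + 1 - j)

include hn

lemma gen_mul_gen {c : ℕ} {f g h k : X → Fin n} (hf : XMono f) (hg : XMono g)
    (hh : XMono h) (hk : XMono k) (hfg : kerF f = kerF g) (hhk : kerF h = kerF k)
    (hc : #(kerF (n := n) h) ≤ c) :
    (Tm f - Tm g) * (Tm (n := n) h - Tm k) ∈ Nmod (X := X) (n := n) (c - 1) := by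
  have hexp : (Tm f - Tm g) * (Tm (n := n) h - Tm k) =
      (Tm (pairF hn h f) - Tm (pairF hn k f)) - (Tm (pairF hn h g) - Tm (pairF hn k g)) := by
    rw [sub_mul, mul_sub, mul_sub, Tm_mul hn f h hf hh, Tm_mul hn f k hf hk,
      Tm_mul hn g h hg hh, Tm_mul hn g k hg hk]
  rw [hexp]
  by_cases hsub : kerF h ⊆ kerF f
  · rw [Tm_pairF_collapse hn hsub, Tm_pairF_collapse hn (hhk ▸ hsub),
      Tm_pairF_collapse hn (hfg ▸ hsub), Tm_pairF_collapse hn (hfg ▸ hhk ▸ hsub)]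
    simp only [sub_self]
    exact Submodule.zero_mem _
  · have hcard : ∀ u : X → Fin n, kerF u = kerF f → #(kerF h ∩ kerF u) ≤ c - 1 := by
      intro u hu
      have hss : kerF h ∩ kerF u ⊂ kerF h := by
        refine ⟨Finset.inter_subset_left, fun habs => hsub ?_⟩
        intro p hp
        have := habs hp
        rw [← hu]
        exact (Finset.mem_inter.1 this).2
      have := Finset.card_lt_card hss
      omega
    apply Submodule.sub_mem
    · apply Submodule.subset_span
      refine ⟨pairF hn h f, pairF hn k f, XMono_pairF hn hh hf, XMono_pairF hn hk hf, ?_, ?_, rfl⟩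
      · rw [kerF_pairF, kerF_pairF, hhk]
      · rw [kerF_pairF]
        exact hcard f rfl
    · apply Submodule.subset_span
      refine ⟨pairF hn h g, pairF hn k g, XMono_pairF hn hh hg, XMono_pairF hn hk hg, ?_, ?_, rfl⟩
      · rw [kerF_pairF, kerF_pairF, hhk]
      · rw [kerF_pairF]
        exact hcard g hfg.symm

lemma kerF_card_le (f : X → Fin n) : #(kerF (n := n) f) ≤ n * n := by
  have h1 : #(kerF (n := n) f) ≤ Fintype.card (X × X) := Finset.card_le_univ _
  rwa [Fintype.card_prod, hn] at h1

lemma commutator_Amod {x y : Matrix (LinExt X n) (LinExt X n) ℚ}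
    (hx : x ∈ Amod (X := X) (n := n)) (hy : y ∈ Amod (X := X) (n := n)) :
    x * y - y * x ∈ Nmod (X := X) (n := n) (n * n) := by
  refine commutator_span ?_ hx hy
  rintro a ⟨f, hf, rfl⟩ b ⟨g, hg, rfl⟩
  rw [Tm_mul hn f g hf hg, Tm_mul hn g f hg hf]
  apply Submodule.subset_span
  refine ⟨pairF hn g f, pairF hn f g, XMono_pairF hn hg hf, XMono_pairF hn hf hg, ?_, ?_, rfl⟩
  · rw [kerF_pairF, kerF_pairF, Finset.inter_comm]
  · rw [kerF_pairF]
    exact le_trans (Finset.card_le_card Finset.inter_subset_left) (kerF_card_le hn g)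

lemma commutator_Nmod {c : ℕ} {x y : Matrix (LinExt X n) (LinExt X n) ℚ}
    (hx : x ∈ Nmod (X := X) (n := n) c) (hy : y ∈ Nmod (X := X) (n := n) c) :
    x * y - y * x ∈ Nmod (X := X) (n := n) (c - 1) := by
  refine commutator_span ?_ hx hy
  rintro a ⟨f, g, hf, hg, hfg, hcf, rfl⟩ b ⟨h, k, hh, hk, hhk, hch, rfl⟩
  exact Submodule.sub_mem _
    (gen_mul_gen hn hf hg hh hk hfg hhk hch)
    (gen_mul_gen hn hh hk hf hg hhk hfg hcf)

lemma Amod_mul {x y : Matrix (LinExt X n) (LinExt X n) ℚ}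
    (hx : x ∈ Amod (X := X) (n := n)) (hy : y ∈ Amod (X := X) (n := n)) :
    x * y ∈ Amod (X := X) (n := n) := by
  refine mul_mem_span ?_ hx hy
  rintro a ⟨f, hf, rfl⟩ b ⟨g, hg, rfl⟩
  rw [Tm_mul hn f g hf hg]
  exact Submodule.subset_span ⟨pairF hn g f, XMono_pairF hn hg hf, rfl⟩

/-- The Lie subalgebra of sorting operators. -/
noncomputable def Kalg : LieSubalgebra ℚ (Matrix (LinExt X n) (LinExt X n) ℚ) :=
  { Amod (X := X) (n := n) with
    lie_mem' := fun {x y} hx hy => by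
      rw [Ring.lie_def]
      exact Submodule.sub_mem _ (Amod_mul hn hx hy) (Amod_mul hn hy hx) }

lemma Cseq_step (j : ℕ) {x y : Matrix (LinExt X n) (LinExt X n) ℚ}
    (hx : x ∈ Cseq (X := X) (n := n) j) (hy : y ∈ Cseq (X := X) (n := n) j) :
    x * y - y * x ∈ Cseq (X := X) (n := n) (j + 1) := by
  rcases Nat.eq_zero_or_pos j with rfl | hj
  · rw [Cseq, if_neg (by omega)]
    rw [Cseq, if_pos rfl] at hx hy
    have := commutator_Amod hn hx hy
    rwa [show n * n + 1 - 1 = n * n by omega]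
  · rw [Cseq, if_neg (by omega)] at hx hy
    rw [Cseq, if_neg (by omega)]
    have := commutator_Nmod hn hx hy
    rwa [show n * n + 1 - j - 1 = n * n + 1 - (j + 1) by omega] at this

lemma derived_le (j : ℕ) :
    ∀ x : Kalg (X := X) hn, x ∈ LieAlgebra.derivedSeries ℚ (Kalg (X := X) hn) j →
      (x : Matrix (LinExt X n) (LinExt X n) ℚ) ∈ Cseq (X := X) (n := n) j := by
  induction j with
  | zero =>
    intro x _
    rw [Cseq, if_pos rfl]
    exact x.2
  | succ j ih =>
    intro x hx
    rw [LieAlgebra.derivedSeries_def, LieAlgebra.derivedSeriesOfIdeal_succ,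
      ← LieAlgebra.derivedSeries_def] at hx
    rw [← LieSubmodule.mem_toSubmodule, LieSubmodule.lieIdeal_oper_eq_linear_span'] at hx
    induction hx using Submodule.span_induction with
    | mem m hm =>
      obtain ⟨a, ha, b, hb, rfl⟩ := hm
      have hcoe : ((⁅a, b⁆ : Kalg (X := X) hn) : Matrix (LinExt X n) (LinExt X n) ℚ) =
          (a : Matrix (LinExt X n) (LinExt X n) ℚ) * b - (b : Matrix (LinExt X n) (LinExt X n) ℚ) * a := by
        rw [LieSubalgebra.coe_bracket, Ring.lie_def]
      rw [hcoe]
      exact Cseq_step hn j (ih a ha) (ih b hb)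
    | zero => simpa using (Cseq (X := X) (n := n) (j + 1)).zero_mem
    | add u v _ _ hu hv =>
      have := (Cseq (X := X) (n := n) (j + 1)).add_mem hu hv
      simpa using this
    | smul r u _ hu =>
      have := (Cseq (X := X) (n := n) (j + 1)).smul_mem r hu
      simpa using this

lemma Kalg_solvable : LieAlgebra.IsSolvable (Kalg (X := X) hn) := by
  refine (LieAlgebra.isSolvable_iff ℚ _).2 ⟨n * n + 1, ?_⟩
  rw [LieSubmodule.eq_bot_iff]
  intro m hm
  have h1 := derived_le hn (n * n + 1) m hm
  rw [Cseq, if_neg (by omega), show n * n + 1 - (n * n + 1) = 0 by omega] at h1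
  have h2 := Nmod_zero_le_bot (X := X) (n := n) h1
  rw [Submodule.mem_bot] at h2
  exact Subtype.ext h2

end BSolv


/-- The Lie algebra (under the commutator bracket on matrices) generated by the matrices
`B_{X,ε}`, `ε ∈ {0,1}^{{1,…,n-1}}`, is solvable. -/
theorem lie_algebra_of_Bmats_isSolvable (X : Type*) [PartialOrder X] [Fintype X] (n : ℕ)
    (hn : Fintype.card X = n) [Fintype (LinExt X n)] [DecidableEq (LinExt X n)] :
    LieAlgebra.IsSolvable
      (LieSubalgebra.lieSpan ℚ (Matrix (LinExt X n) (LinExt X n) ℚ)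
        (Set.range fun ε : Fin (n - 1) → Bool => Bmat X n ε)) := by
  have hle : LieSubalgebra.lieSpan ℚ (Matrix (LinExt X n) (LinExt X n) ℚ)
      (Set.range fun ε : Fin (n - 1) → Bool => Bmat X n ε) ≤ BSolv.Kalg (X := X) hn := by
    rw [LieSubalgebra.lieSpan_le]
    rintro M ⟨ε, rfl⟩
    exact BSolv.Bmat_mem ε
  haveI := BSolv.Kalg_solvable (X := X) hn
  have hinj : Function.Injective (LieSubalgebra.inclusion hle) := by
    intro a b hab
    have h2 : ((LieSubalgebra.inclusion hle) a : ↥(BSolv.Kalg (X := X) hn)).val =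
        ((LieSubalgebra.inclusion hle) b : ↥(BSolv.Kalg (X := X) hn)).val :=
      congrArg Subtype.val hab
    exact Subtype.ext h2
  exact hinj.lieAlgebra_isSolvable
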